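/- Let p and q be perfect paths in a monomial algebra Λ with p ≺ q (p a proper left divisor of q). Then there exists an arrow q → p in the Hasse quiver of (ℙ_Λ, ⪯) if and only if the perfect path r in the factorization q = pr is co-elementary. -/

import Mathlib

/-! Combinatorial model of a monomial algebra `Λ = KQ/I`.

A finite quiver is given by source and target maps on a type of arrows.
A (nontrivial) path is encoded as a nonempty list of composable arrows;
the admissible monomial ideal `I` is encoded by its set `F` of minimal
generating paths, and a path is zero in `Λ` iff it contains a member of
`F` as a contiguous subpath (infix). -/

/-- A quiver structure on arrow type `E` with vertex type `V`. -/
structure QuiverData (V E : Type) where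
  src : E → V
  tgt : E → V

namespace QuiverData

variable {V E : Type} (Q : QuiverData V E)

/-- `l` is the list of arrows of a path of `Q`. -/
def IsPath (l : List E) : Prop := l.Chain' fun a b => Q.tgt a = Q.src b

/-- Two paths are composable: the target of the first equals the source of
the second (vacuously true if one of them is trivial). -/
def Composable (l m : List E) : Prop :=
  ∀ a ∈ l.getLast?, ∀ b ∈ m.head?, Q.tgt a = Q.src b

end QuiverData

/-- A monomial algebra, encoded combinatorially: a finite quiver together with
the set `F` of minimal paths generating the admissible monomial ideal `I`. -/
structure MonomialData (V E : Type) extends QuiverData V E where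
  F : Set (List E)
  F_path : ∀ f ∈ F, toQuiverData.IsPath f
  F_len : ∀ f ∈ F, 2 ≤ f.length
  F_min : ∀ f ∈ F, ∀ g, g <:+: f → (∃ f' ∈ F, f' <:+: g) → g = f
  admissible : ∃ N, ∀ l, toQuiverData.IsPath l → N ≤ l.length → ∃ f ∈ F, f <:+: l

namespace MonomialData

variable {V E : Type} (M : MonomialData V E)

/-- The path `l` is zero in `Λ`. -/
def IsZero (l : List E) : Prop := ∃ f ∈ M.F, f <:+: l

/-- `l` is a path which is nonzero in `Λ`. -/
def Nonzero (l : List E) : Prop := M.toQuiverData.IsPath l ∧ ¬ M.IsZero l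

/-- A perfect pair of nonzero nontrivial paths, after Chen–Shen–Zhou. -/
def PerfectPair (p q : List E) : Prop :=
  p ≠ [] ∧ q ≠ [] ∧ M.Nonzero p ∧ M.Nonzero q ∧
  M.toQuiverData.Composable p q ∧ M.IsZero (p ++ q) ∧
  (∀ q', q' ≠ [] → M.Nonzero q' → M.toQuiverData.Composable p q' →
      M.IsZero (p ++ q') → q <+: q') ∧
  (∀ p', p' ≠ [] → M.Nonzero p' → M.toQuiverData.Composable p' q →
      M.IsZero (p' ++ q) → p <:+ p')

/-- A perfect path: a path appearing in a perfect path sequence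
`(p₁, …, pₙ, pₙ₊₁ = p₁)`, encoded by a periodic sequence of paths each of
whose consecutive pairs is perfect. -/
def IsPerfect (p : List E) : Prop :=
  ∃ (n : ℕ) (s : ℕ → List E), 0 < n ∧ s 0 = p ∧ (∀ i, s (i + n) = s i) ∧
    ∀ i, M.PerfectPair (s i) (s (i + 1))

/-- `c` is the underlying cycle associated with the perfect path `p`:
the shortest cycle `c` with `p₁ ⋯ pₙ = cˡ` for some `l > 0`, for a perfect
path sequence through `p`. -/
def IsUnderlyingCycleOf (c p : List E) : Prop :=
  ∃ (n : ℕ) (s : ℕ → List E), 0 < n ∧ s 0 = p ∧ (∀ i, s (i + n) = s i) ∧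
    (∀ i, M.PerfectPair (s i) (s (i + 1))) ∧
    (∃ l, 0 < l ∧ ((List.range n).map s).flatten = (List.replicate l c).flatten) ∧
    (∀ c' l', 0 < l' → ((List.range n).map s).flatten = (List.replicate l' c').flatten →
      c.length ≤ c'.length)


/-- There is an overlap between the perfect paths `p` and `q` (`p` overlaps `q`). -/
def Overlap (p q : List E) : Prop :=
  ∃ x p' q' : List E, x ≠ [] ∧ p = p' ++ x ∧ q = x ++ q' ∧
    M.Nonzero (p' ++ x ++ q') ∧ (p = q → p' ≠ [] ∧ q' ≠ [])

/-- An elementary perfect path: a source in the Hasse quiver of the left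
divisibility order `⪯` on perfect paths, i.e. it is not a proper left divisor
of any perfect path. -/
def Elementary (p : List E) : Prop :=
  M.IsPerfect p ∧ ¬ ∃ q, M.IsPerfect q ∧ p <+: q ∧ p ≠ q

/-- A co-elementary perfect path: a sink in the Hasse quiver of `⪯`, i.e.
no proper left divisor of it is perfect. -/
def CoElementary (p : List E) : Prop :=
  M.IsPerfect p ∧ ¬ ∃ q, M.IsPerfect q ∧ q <+: p ∧ q ≠ p

/-- There is an arrow `q ⟶ p` in the Hasse quiver of `(ℙ_Λ, ⪯)`:
`p ≺ q` and no perfect path lies strictly between them. -/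
def HasseArrowPrec (q p : List E) : Prop :=
  M.IsPerfect p ∧ M.IsPerfect q ∧ p <+: q ∧ p ≠ q ∧
    ¬ ∃ r, M.IsPerfect r ∧ p <+: r ∧ p ≠ r ∧ r <+: q ∧ r ≠ q

end MonomialData


namespace MonomialData
variable {V E : Type} {M : MonomialData V E}
open List

-- Basic lemmas
lemma zero_mono {l m : List E} (h : M.IsZero l) (hlm : l <:+: m) : M.IsZero m :=
  let ⟨f, hf, hfl⟩ := h; ⟨f, hf, hfl.trans hlm⟩

lemma path_infix {l m : List E} (h : M.toQuiverData.IsPath m) (hlm : l <:+: m) :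
    M.toQuiverData.IsPath l := List.IsChain.infix h hlm

lemma nonzero_infix {l m : List E} (h : M.Nonzero m) (hlm : l <:+: m) : M.Nonzero l :=
  ⟨path_infix h.1 hlm, fun hz => h.2 (zero_mono hz hlm)⟩

lemma path_append {a b : List E} (ha : M.toQuiverData.IsPath a)
    (hb : M.toQuiverData.IsPath b) (hc : M.toQuiverData.Composable a b) :
    M.toQuiverData.IsPath (a ++ b) := List.isChain_append.mpr ⟨ha, hb, hc⟩

lemma comp_of_path {a b : List E} (h : M.toQuiverData.IsPath (a ++ b)) :
    M.toQuiverData.Composable a b := (List.isChain_append.mp h).2.2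

lemma comp_congr {a b a' b' : List E} (h : M.toQuiverData.Composable a b)
    (ha : a'.getLast? = a.getLast?) (hb : b'.head? = b.head?) :
    M.toQuiverData.Composable a' b' := fun x hx y hy => h x (ha ▸ hx) y (hb ▸ hy)

/-- extend first argument of composability on the left -/
lemma comp_extL {a b c : List E} (h : M.toQuiverData.Composable b c) (hb : b ≠ []) :
    M.toQuiverData.Composable (a ++ b) c :=
  comp_congr h (List.getLast?_append_of_ne_nil _ hb) rfl

/-- shrink first argument: `Composable (a++b) c → Composable b c` when `b ≠ []` -/
lemma comp_shrinkL {a b c : List E} (h : M.toQuiverData.Composable (a ++ b) c) (hb : b ≠ []) :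
    M.toQuiverData.Composable b c :=
  comp_congr h (List.getLast?_append_of_ne_nil _ hb).symm rfl

/-- extend second argument on the right -/
lemma comp_extR {a b c : List E} (h : M.toQuiverData.Composable a b) (hb : b ≠ []) :
    M.toQuiverData.Composable a (b ++ c) :=
  comp_congr h rfl (List.head?_append_of_ne_nil _ hb)

lemma comp_shrinkR {a b c : List E} (h : M.toQuiverData.Composable a (b ++ c)) (hb : b ≠ []) :
    M.toQuiverData.Composable a b :=
  comp_congr h rfl (List.head?_append_of_ne_nil _ hb).symm

-- PerfectPair accessors
namespace PerfectPair
variable {a b : List E}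
lemma ne1 (h : M.PerfectPair a b) : a ≠ [] := h.1
lemma ne2 (h : M.PerfectPair a b) : b ≠ [] := h.2.1
lemma nz1 (h : M.PerfectPair a b) : M.Nonzero a := h.2.2.1
lemma nz2 (h : M.PerfectPair a b) : M.Nonzero b := h.2.2.2.1
lemma comp (h : M.PerfectPair a b) : M.toQuiverData.Composable a b := h.2.2.2.2.1
lemma zero (h : M.PerfectPair a b) : M.IsZero (a ++ b) := h.2.2.2.2.2.1
lemma min (h : M.PerfectPair a b) : ∀ q', q' ≠ [] → M.Nonzero q' → M.toQuiverData.Composable a q' →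
    M.IsZero (a ++ q') → b <+: q' := h.2.2.2.2.2.2.1
lemma max (h : M.PerfectPair a b) : ∀ p', p' ≠ [] → M.Nonzero p' → M.toQuiverData.Composable p' b →
    M.IsZero (p' ++ b) → a <:+ p' := h.2.2.2.2.2.2.2
end PerfectPair

lemma prefix_antisymm {a b : List E} (h1 : a <+: b) (h2 : b <+: a) : a = b :=
  h1.eq_of_length (le_antisymm h1.length_le h2.length_le)

lemma suffix_antisymm {a b : List E} (h1 : a <:+ b) (h2 : b <:+ a) : a = b :=
  h1.eq_of_length (le_antisymm h1.length_le h2.length_le)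

lemma succ_unique {a b c : List E} (h1 : M.PerfectPair a b) (h2 : M.PerfectPair a c) : b = c :=
  prefix_antisymm (h1.min c h2.ne2 h2.nz2 h2.comp h2.zero)
    (h2.min b h1.ne2 h1.nz2 h1.comp h1.zero)

lemma pred_unique {a b c : List E} (h1 : M.PerfectPair a c) (h2 : M.PerfectPair b c) : a = b :=
  suffix_antisymm (h1.max b h2.ne1 h2.nz1 h2.comp h2.zero)
    (h2.max a h1.ne1 h1.nz1 h1.comp h1.zero)



lemma nonzero_proper_infix_F {f g : List E} (hf : f ∈ M.F) (hg : g <:+: f) (hne : g ≠ f) :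
    M.Nonzero g :=
  ⟨path_infix (M.F_path f hf) hg, fun ⟨f', hf', hf'g⟩ => hne (M.F_min f hf g hg ⟨f', hf', hf'g⟩)⟩

lemma PerfectPair.mem_F {a b : List E} (h : M.PerfectPair a b) : a ++ b ∈ M.F := by
  obtain ⟨f, hfF, s, e, hse⟩ := h.zero
  -- step 1 : e = []
  have he : e = [] := by
    by_contra he
    have hpre : s ++ f <+: a ++ b := ⟨e, by rw [← hse, List.append_assoc]⟩
    by_cases hlen : (s ++ f).length ≤ a.length
    · have h1 : s ++ f <+: a :=
        List.prefix_of_prefix_length_le hpre (List.prefix_append a b) hlen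
      exact h.nz1.2 ⟨f, hfF, (List.suffix_append s f).isInfix.trans h1.isInfix⟩
    · have h1 : a <+: s ++ f :=
        List.prefix_of_prefix_length_le (List.prefix_append a b) hpre (by omega)
      obtain ⟨b₁, hb₁⟩ := h1
      have hb₁b : b₁ ++ e = b := by
        have : a ++ (b₁ ++ e) = a ++ b := by
          rw [← List.append_assoc, hb₁, ← hse, List.append_assoc]
        exact List.append_cancel_left this
      have hb₁ne : b₁ ≠ [] := by
        intro hnil; rw [hnil, List.append_nil] at hb₁
        rw [← hb₁] at hlen; exact hlen le_rfl
      have hb₁lt : b₁.length < b.length := by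
        have h2 : 0 < e.length := List.length_pos_iff.mpr he
        have h3 := congrArg List.length hb₁b
        rw [List.length_append] at h3; omega
      have hmin := h.min b₁ hb₁ne (nonzero_infix h.nz2 ⟨[], e, by simp [hb₁b]⟩)
        (comp_shrinkR (by rw [hb₁b]; exact h.comp) hb₁ne)
        ⟨f, hfF, by rw [hb₁]; exact (List.suffix_append s f).isInfix⟩
      exact absurd hmin.length_le (by omega)
  rw [he, List.append_nil] at hse
  -- step 2 : f = a₁ ++ b with a₁ = a
  have hsf : f <:+ a ++ b := ⟨s, hse⟩
  by_cases hlen : f.length ≤ b.length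
  · have h1 : f <:+ b := List.suffix_of_suffix_length_le hsf (List.suffix_append a b) hlen
    exact absurd ⟨f, hfF, h1.isInfix⟩ h.nz2.2
  · have h1 : b <:+ f :=
      List.suffix_of_suffix_length_le (List.suffix_append a b) hsf (by omega)
    obtain ⟨a₁, ha₁⟩ := h1
    have ha₁a : s ++ a₁ = a := by
      have : (s ++ a₁) ++ b = a ++ b := by rw [List.append_assoc, ha₁, hse]
      exact List.append_cancel_right this
    have ha₁ne : a₁ ≠ [] := by
      intro hnil; rw [hnil, List.nil_append] at ha₁
      rw [ha₁] at hlen; exact hlen le_rfl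
    have hmax := h.max a₁ ha₁ne (nonzero_infix h.nz1 ⟨s, [], by simp [ha₁a]⟩)
      (comp_shrinkL (by rw [ha₁a]; exact h.comp) ha₁ne)
      ⟨f, hfF, by rw [ha₁]⟩
    have : a₁ = a := suffix_antisymm ⟨s, ha₁a⟩ hmax
    rw [← this, ha₁]; exact hfF

lemma IsPerfect.ne_nil {a : List E} (h : M.IsPerfect a) : a ≠ [] := by
  obtain ⟨n, s, hn, h0, hper, hpair⟩ := h
  exact h0 ▸ (hpair 0).ne1

lemma IsPerfect.nonzero {a : List E} (h : M.IsPerfect a) : M.Nonzero a := by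
  obtain ⟨n, s, hn, h0, hper, hpair⟩ := h
  exact h0 ▸ (hpair 0).nz1

lemma isPerfect_seq {n : ℕ} {s : ℕ → List E} (hn : 0 < n) (hper : ∀ i, s (i + n) = s i)
    (hpair : ∀ i, M.PerfectPair (s i) (s (i + 1))) (j : ℕ) : M.IsPerfect (s j) :=
  ⟨n, fun i => s (i + j), hn, by simp, fun i => by
      have := hper (i + j); rwa [Nat.add_right_comm] at this,
    fun i => by have := hpair (i + j); rwa [show i + j + 1 = i + 1 + j by omega] at this⟩

lemma isPerfect_of_pair_right {a b : List E} (hab : M.PerfectPair a b) (hb : M.IsPerfect b) :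
    M.IsPerfect a := by
  obtain ⟨n, s, hn, h0, hper, hpair⟩ := hb
  have hsn : s n = b := by rw [← h0, ← hper 0, Nat.zero_add]
  have h1 : M.PerfectPair (s (n - 1)) b := by
    have := hpair (n - 1)
    rwa [show n - 1 + 1 = n by omega, hsn] at this
  rw [pred_unique hab h1]
  exact isPerfect_seq hn hper hpair _

lemma L1 {p q r x y : List E} (hq : M.PerfectPair q x) (hp : M.PerfectPair p y)
    (hfac : q = p ++ r) (hr : r ≠ []) : y = r ++ x := by
  have hrq : r <:+ q := hfac ▸ List.suffix_append p r
  have nzr : M.Nonzero r := nonzero_infix hq.nz1 hrq.isInfix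
  have comp_rx : M.toQuiverData.Composable r x := by
    have := hq.comp; rw [hfac] at this; exact comp_shrinkL this hr
  have nz_rx : ¬ M.IsZero (r ++ x) := by
    intro hz
    have hmax := hq.max r hr nzr comp_rx hz
    have := hmax.length_le
    rw [hfac, List.length_append] at this
    exact hp.ne1 (List.length_eq_zero_iff.mp (by omega))
  have comp_p_rx : M.toQuiverData.Composable p (r ++ x) := by
    have hpr : M.toQuiverData.Composable p r := by
      have : M.toQuiverData.IsPath (p ++ r) := by rw [← hfac]; exact hq.nz1.1
      exact comp_of_path this
    exact comp_extR hpr hr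
  have zero_p_rx : M.IsZero (p ++ (r ++ x)) := by
    have := hq.zero; rwa [hfac, List.append_assoc] at this
  have hy : y <+: r ++ x := hp.min _ (by simp [hr])
    ⟨path_append nzr.1 hq.nz2.1 comp_rx, nz_rx⟩ comp_p_rx zero_p_rx
  have hzq : M.Nonzero q := hq.nz1
  rcases List.prefix_or_prefix_of_prefix hy (List.prefix_append r x) with hyr | hry
  · exfalso
    have : p ++ y <+: q := by rw [hfac]; exact (List.prefix_append_right_inj p).mpr hyr
    exact hzq.2 (zero_mono hp.zero this.isInfix)
  · obtain ⟨z, hz⟩ := hry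
    by_cases hznil : z = []
    · exfalso
      rw [hznil, List.append_nil] at hz
      have : p ++ y <+: q := by rw [hfac, ← hz]
      exact hzq.2 (zero_mono hp.zero this.isInfix)
    · have hzx : z <+: x := by
        rw [← hz] at hy; exact (List.prefix_append_right_inj r).mp hy
      have hqz : M.IsZero (q ++ z) := by
        have := hp.zero; rwa [← hz, ← List.append_assoc, ← hfac] at this
      have nzz : M.Nonzero z := nonzero_infix hq.nz2 hzx.isInfix
      have compqz : M.toQuiverData.Composable q z := by
        have : M.toQuiverData.Composable r z := by
          have : M.toQuiverData.IsPath (r ++ z) := by rw [hz]; exact hp.nz2.1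
          exact comp_of_path this
        rw [hfac]; exact comp_extL this hr
      have := hq.min z hznil nzz compqz hqz
      have hzeq : z = x := prefix_antisymm hzx this
      rw [← hz, hzeq]

lemma L1' {p₁ p₂ q₁ q₂ r : List E} (h1 : M.PerfectPair p₁ p₂) (h2 : M.PerfectPair q₁ q₂)
    (hfac : p₁ = r ++ q₁) (hr : r ≠ []) : ∃ r₂, r₂ ≠ [] ∧ q₂ = p₂ ++ r₂ := by
  have comp : M.toQuiverData.Composable p₁ q₂ :=
    comp_congr h2.comp (by rw [hfac]; exact List.getLast?_append_of_ne_nil _ h2.ne1) rfl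
  have zero : M.IsZero (p₁ ++ q₂) := by
    rw [hfac, List.append_assoc]
    exact zero_mono h2.zero (List.suffix_append r _).isInfix
  have hp2 : p₂ <+: q₂ := h1.min q₂ h2.ne2 h2.nz2 comp zero
  have hne : p₂ ≠ q₂ := by
    intro heq
    have hmax := h1.max q₁ h2.ne1 h2.nz1 (by rw [heq]; exact h2.comp)
      (by rw [heq]; exact h2.zero)
    have := hmax.length_le
    rw [hfac, List.length_append] at this
    exact hr (List.length_eq_zero_iff.mp (by omega))
  obtain ⟨r₂, hr₂⟩ := hp2
  exact ⟨r₂, fun h => hne (by rw [← hr₂, h, List.append_nil]), hr₂.symm⟩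



lemma suffix_strip {a b c : List E} (h : a ++ c <:+ b ++ c) : a <:+ b := by
  obtain ⟨x, hx⟩ := h
  rw [← List.append_assoc] at hx
  exact ⟨x, List.append_cancel_right hx⟩

lemma suffix_extend {a b c : List E} (h : a <:+ b) : a ++ c <:+ b ++ c := by
  obtain ⟨x, hx⟩ := h
  exact ⟨x, by rw [← List.append_assoc, hx]⟩

lemma PC1 {A A' A'' B B' ρ : List E}
    (hAA' : M.PerfectPair A A') (hA'A'' : M.PerfectPair A' A'')
    (hBB' : M.PerfectPair B B')
    (hB : B = A ++ ρ) (hA' : A' = ρ ++ B') (hρ : ρ ≠ []) :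
    M.PerfectPair ρ (B' ++ A'') := by
  have nzρ : M.Nonzero ρ := nonzero_infix hBB'.nz1 (hB ▸ List.suffix_append A ρ).isInfix
  have haB' : B'.getLast? = A'.getLast? := by
    rw [hA', List.getLast?_append_of_ne_nil _ hBB'.ne2]
  have compB'A'' : M.toQuiverData.Composable B' A'' := comp_congr hA'A''.comp haB' rfl
  have nzB'A'' : M.Nonzero (B' ++ A'') := by
    refine ⟨path_append hBB'.nz2.1 hA'A''.nz2.1 compB'A'', fun hz => ?_⟩
    have hmax := hA'A''.max B' hBB'.ne2 hBB'.nz2 compB'A'' hz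
    have := hmax.length_le
    rw [hA', List.length_append] at this
    exact hρ (List.length_eq_zero_iff.mp (by omega))
  have compρ : M.toQuiverData.Composable ρ (B' ++ A'') :=
    comp_extR (comp_of_path (hA' ▸ hA'A''.nz1.1)) hBB'.ne2
  have zeroρ : M.IsZero (ρ ++ (B' ++ A'')) := by
    rw [← List.append_assoc, ← hA']; exact hA'A''.zero
  refine ⟨hρ, by simp [hBB'.ne2], nzρ, nzB'A'', compρ, zeroρ, ?_, ?_⟩
  · intro z hz0 hznz hcomp hzero
    have zeroBz : M.IsZero (B ++ z) := by
      rw [hB, List.append_assoc]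
      exact zero_mono hzero (List.suffix_append A (ρ ++ z)).isInfix
    have compBz : M.toQuiverData.Composable B z := by
      rw [hB]; exact comp_extL hcomp hρ
    obtain ⟨z', hz'⟩ := hBB'.min z hz0 hznz compBz zeroBz
    have hz'ne : z' ≠ [] := by
      intro hnil; rw [hnil, List.append_nil] at hz'
      rw [← hz'] at hzero
      exact hA'A''.nz1.2 (by rw [hA']; exact hzero)
    have zeroA'z' : M.IsZero (A' ++ z') := by
      rw [hA', List.append_assoc, hz']; exact hzero
    have nzz' : M.Nonzero z' := nonzero_infix hznz ⟨B', [], by simp [hz']⟩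
    have compA'z' : M.toQuiverData.Composable A' z' := by
      have h1 : M.toQuiverData.Composable B' z' :=
        comp_of_path (by rw [hz']; exact hznz.1)
      exact comp_congr h1 haB'.symm rfl
    have := hA'A''.min z' hz'ne nzz' compA'z' zeroA'z'
    rw [← hz']
    exact (List.prefix_append_right_inj B').mpr this
  · intro w hw0 hwnz hcomp hwzero
    by_cases hwB' : M.IsZero (w ++ B')
    · have compwB' : M.toQuiverData.Composable w B' := comp_shrinkR hcomp hBB'.ne2
      have := hBB'.max w hw0 hwnz compwB' hwB'
      exact (hB ▸ List.suffix_append A ρ).trans this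
    · have compwB' : M.toQuiverData.Composable w B' := comp_shrinkR hcomp hBB'.ne2
      have nzwB' : M.Nonzero (w ++ B') := ⟨path_append hwnz.1 hBB'.nz2.1 compwB', hwB'⟩
      have zerowB' : M.IsZero ((w ++ B') ++ A'') := by
        rw [List.append_assoc]; exact hwzero
      have compwB'A'' : M.toQuiverData.Composable (w ++ B') A'' :=
        comp_extL compB'A'' hBB'.ne2
      have hmax := hA'A''.max (w ++ B') (by simp [hBB'.ne2]) nzwB' compwB'A'' zerowB'
      rw [hA'] at hmax
      exact suffix_strip hmax

lemma PC2 {A' A'' A''' B' B'' ρ ρ' Q3 : List E}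
    (hA'A'' : M.PerfectPair A' A'') (hA''A''' : M.PerfectPair A'' A''')
    (hB'B'' : M.PerfectPair B' B'')
    (hA' : A' = ρ ++ B') (hB'' : B'' = A'' ++ ρ') (hA''' : A''' = ρ' ++ Q3)
    (hρ : ρ ≠ []) (hρ' : ρ' ≠ []) :
    M.PerfectPair (B' ++ A'') ρ' := by
  have haB' : B'.getLast? = A'.getLast? := by
    rw [hA', List.getLast?_append_of_ne_nil _ hB'B''.ne1]
  have compB'A'' : M.toQuiverData.Composable B' A'' := comp_congr hA'A''.comp haB' rfl
  have nzB'A'' : M.Nonzero (B' ++ A'') := by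
    refine ⟨path_append hB'B''.nz1.1 hA'A''.nz2.1 compB'A'', fun hz => ?_⟩
    have hmax := hA'A''.max B' hB'B''.ne1 hB'B''.nz1 compB'A'' hz
    have := hmax.length_le
    rw [hA', List.length_append] at this
    exact hρ (List.length_eq_zero_iff.mp (by omega))
  have nzρ' : M.Nonzero ρ' := nonzero_infix hB'B''.nz2 (hB'' ▸ List.suffix_append A'' ρ').isInfix
  have compc : M.toQuiverData.Composable (B' ++ A'') ρ' :=
    comp_extL (comp_of_path (hB'' ▸ hB'B''.nz2.1)) hA'A''.ne2
  have zeroc : M.IsZero ((B' ++ A'') ++ ρ') := by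
    rw [List.append_assoc, ← hB'']; exact hB'B''.zero
  refine ⟨by simp [hB'B''.ne1], hρ', nzB'A'', nzρ', compc, zeroc, ?_, ?_⟩
  · intro z hz0 hznz hcomp hzero
    by_cases hA''z : M.IsZero (A'' ++ z)
    · have compA''z : M.toQuiverData.Composable A'' z := by
        have := hcomp; exact comp_shrinkL this hA'A''.ne2
      have h1 := hA''A'''.min z hz0 hznz compA''z hA''z
      have h2 : ρ' <+: A''' := hA''' ▸ List.prefix_append ρ' Q3
      exact h2.trans h1
    · have compA''z : M.toQuiverData.Composable A'' z := comp_shrinkL hcomp hA'A''.ne2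
      have nzA''z : M.Nonzero (A'' ++ z) := ⟨path_append hA'A''.nz2.1 hznz.1 compA''z, hA''z⟩
      have zeroB' : M.IsZero (B' ++ (A'' ++ z)) := by
        rw [← List.append_assoc]; exact hzero
      have compB' : M.toQuiverData.Composable B' (A'' ++ z) := comp_extR compB'A'' hA'A''.ne2
      have := hB'B''.min (A'' ++ z) (by simp [hA'A''.ne2]) nzA''z compB' zeroB'
      rw [hB''] at this
      exact (List.prefix_append_right_inj A'').mp this
  · intro w hw0 hwnz hcomp hwzero
    have zerowA''' : M.IsZero (w ++ A''') := by
      rw [hA''', ← List.append_assoc]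
      exact zero_mono hwzero (⟨[], Q3, by simp⟩ : (w ++ ρ') <:+: (w ++ ρ') ++ Q3)
    have compwA''' : M.toQuiverData.Composable w A''' :=
      comp_congr hcomp rfl (by rw [hA''']; exact List.head?_append_of_ne_nil _ hρ')
    obtain ⟨v, hv⟩ := hA''A'''.max w hw0 hwnz compwA''' zerowA'''
    have hvne : v ≠ [] := by
      intro hnil; rw [hnil, List.nil_append] at hv
      rw [← hv] at hwzero
      exact hB'B''.nz2.2 (by rw [hB'']; exact hwzero)
    have nzv : M.Nonzero v := nonzero_infix hwnz ⟨[], A'', by simp [hv]⟩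
    have compvB'' : M.toQuiverData.Composable v B'' := by
      have h1 : M.toQuiverData.Composable v A'' := comp_of_path (by rw [hv]; exact hwnz.1)
      exact comp_congr h1 rfl (by rw [hB'']; exact List.head?_append_of_ne_nil _ hA'A''.ne2)
    have zerovB'' : M.IsZero (v ++ B'') := by
      rw [hB'', ← List.append_assoc, hv]; exact hwzero
    have := hB'B''.max v hvne nzv compvB'' zerovB''
    rw [← hv]
    exact suffix_extend this

lemma perfect_factor {p q r : List E} (hp : M.IsPerfect p) (hq : M.IsPerfect q)
    (hfac : q = p ++ r) (hr : r ≠ []) : M.IsPerfect r := by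
  obtain ⟨np, P, hnp, hP0, hPper, hPpair⟩ := hp
  obtain ⟨nq, Q, hnq, hQ0, hQper, hQpair⟩ := hq
  have key : ∀ k, ∃ c, c ≠ [] ∧ Q (2*k) = P (2*k) ++ c := by
    intro k; induction k with
    | zero => exact ⟨r, hr, by simpa [hQ0, hP0] using hfac⟩
    | succ k ih =>
      obtain ⟨c, hc, hQc⟩ := ih
      have hP1 : P (2*k+1) = c ++ Q (2*k+1) := L1 (hQpair (2*k)) (hPpair (2*k)) hQc hc
      obtain ⟨c', hc', hQc'⟩ := L1' (hPpair (2*k+1)) (hQpair (2*k+1)) hP1 hc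
      refine ⟨c', hc', ?_⟩
      have e : 2*(k+1) = 2*k+1+1 := by ring
      rw [e]; exact hQc'
  choose rc hrcne hrcfac using key
  have Pfac : ∀ k, P (2*k+1) = rc k ++ Q (2*k+1) :=
    fun k => L1 (hQpair (2*k)) (hPpair (2*k)) (hrcfac k) (hrcne k)
  have Pper : ∀ m i, P (i + m * np) = P i := by
    intro m; induction m with
    | zero => simp
    | succ m ih =>
      intro i
      have e : i + (m+1) * np = (i + m * np) + np := by ring
      rw [e, hPper, ih]
  have Qper : ∀ m i, Q (i + m * nq) = Q i := by
    intro m; induction m with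
    | zero => simp
    | succ m ih =>
      intro i
      have e : i + (m+1) * nq = (i + m * nq) + nq := by ring
      rw [e, hQper, ih]
  have rcper : ∀ k, rc (k + np * nq) = rc k := by
    intro k
    have h1 : Q (2*(k + np*nq)) = Q (2*k) := by
      have e : 2*(k + np*nq) = 2*k + (2*np) * nq := by ring
      rw [e, Qper]
    have h2 : P (2*(k + np*nq)) = P (2*k) := by
      have e : 2*(k + np*nq) = 2*k + (2*nq) * np := by ring
      rw [e, Pper]
    have := hrcfac (k + np*nq)
    rw [h1, h2, hrcfac k] at this
    exact (List.append_cancel_left this).symm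
  have hrc0 : rc 0 = r := by
    have := hrcfac 0
    rw [show 2*0 = 0 from rfl, hQ0, hP0, hfac] at this
    exact (List.append_cancel_left this).symm
  refine ⟨2*(np*nq), fun i => if i % 2 = 0 then rc (i/2) else Q i ++ P (i+1),
    by have := Nat.mul_pos hnp hnq; omega, ?_, ?_, ?_⟩
  · show (if 0 % 2 = 0 then rc (0/2) else _) = r
    rw [if_pos (by omega)]
    simpa using hrc0
  · intro i
    have h2 : (i + 2*(np*nq)) % 2 = i % 2 := by omega
    have h3 : (i + 2*(np*nq)) / 2 = i/2 + np*nq := by omega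
    show (if (i + 2*(np*nq)) % 2 = 0 then rc ((i + 2*(np*nq))/2) else
        Q (i + 2*(np*nq)) ++ P (i + 2*(np*nq) + 1)) =
      (if i % 2 = 0 then rc (i/2) else Q i ++ P (i+1))
    rw [h2, h3]
    by_cases hpar : i % 2 = 0
    · rw [if_pos hpar, if_pos hpar, rcper]
    · rw [if_neg hpar, if_neg hpar]
      have e1 : i + 2*(np*nq) = i + (2*np) * nq := by ring
      have e2 : i + 2*(np*nq) + 1 = (i+1) + (2*nq) * np := by ring
      rw [e2, Pper, e1, Qper]
  · intro i
    rcases Nat.even_or_odd i with he | ho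
    · obtain ⟨k, hk⟩ := he
      have hik : i = 2*k := by omega
      subst hik
      show M.PerfectPair (if (2*k) % 2 = 0 then rc ((2*k)/2) else _)
        (if (2*k+1) % 2 = 0 then rc ((2*k+1)/2) else Q (2*k+1) ++ P (2*k+1+1))
      rw [if_pos (by omega), if_neg (by omega), show (2*k)/2 = k from by omega]
      exact PC1 (hPpair (2*k)) (hPpair (2*k+1)) (hQpair (2*k)) (hrcfac k) (Pfac k) (hrcne k)
    · obtain ⟨k, hk⟩ := ho
      subst hk
      show M.PerfectPair (if (2*k+1) % 2 = 0 then rc ((2*k+1)/2) else Q (2*k+1) ++ P (2*k+1+1))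
        (if (2*k+1+1) % 2 = 0 then rc ((2*k+1+1)/2) else _)
      rw [if_neg (by omega), if_pos (by omega), show (2*k+1+1)/2 = k+1 from by omega]
      have hB'' : Q (2*k+1+1) = P (2*k+1+1) ++ rc (k+1) := by
        have := hrcfac (k+1)
        rwa [show 2*(k+1) = 2*k+1+1 from by ring] at this
      have hA''' : P (2*k+1+1+1) = rc (k+1) ++ Q (2*k+1+1+1) := by
        have := Pfac (k+1)
        rwa [show 2*(k+1)+1 = 2*k+1+1+1 from by ring] at this
      exact PC2 (hPpair (2*k+1)) (hPpair (2*k+1+1)) (hQpair (2*k+1))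
        (Pfac k) hB'' hA''' (hrcne k) (hrcne (k+1))
  


lemma perfect_append {p t t' : List E} (hp : M.IsPerfect p) (ht : M.IsPerfect t)
    (hq : M.IsPerfect (p ++ t ++ t')) (ht' : t' ≠ []) : M.IsPerfect (p ++ t) := by
  have pne : p ≠ [] := hp.ne_nil
  have tne : t ≠ [] := ht.ne_nil
  obtain ⟨np, P, hnp, hP0, hPper, hPpair⟩ := hp
  obtain ⟨nq, Q, hnq, hQ0, hQper, hQpair⟩ := hq
  obtain ⟨nt, T, hnt, hT0, hTper, hTpair⟩ := ht
  have hP01 : M.PerfectPair p (P 1) := hP0 ▸ hPpair 0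
  have hP12 : M.PerfectPair (P 1) (P 2) := hPpair 1
  have hQ01 : M.PerfectPair (p ++ t ++ t') (Q 1) := hQ0 ▸ hQpair 0
  have hT01 : M.PerfectPair t (T 1) := hT0 ▸ hTpair 0
  have htt'ne : t ++ t' ≠ [] := by simp [tne]
  have f1 : P 1 = (t ++ t') ++ Q 1 :=
    L1 hQ01 hP01 (List.append_assoc p t t') htt'ne
  have f1' : P 1 = t ++ (t' ++ Q 1) := by rw [f1, List.append_assoc]
  have tt1F : t ++ T 1 ∈ M.F := hT01.mem_F
  have p1p2F : P 1 ++ P 2 ∈ M.F := hP12.mem_F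
  have qq1F : (p ++ t ++ t') ++ Q 1 ∈ M.F := hQ01.mem_F
  have ht'Q1ne : t' ++ Q 1 ≠ [] := by simp [ht']
  have nzt'Q1 : M.Nonzero (t' ++ Q 1) :=
    nonzero_infix hP12.nz1 (f1' ▸ List.suffix_append t (t' ++ Q 1)).isInfix
  -- T 1 is a prefix of (t' ++ Q 1) ++ P 2
  have hzz' : M.IsZero (t ++ ((t' ++ Q 1) ++ P 2)) := by
    rw [← List.append_assoc, ← f1']
    exact ⟨_, p1p2F, List.infix_rfl⟩
  have nzz' : M.Nonzero ((t' ++ Q 1) ++ P 2) := by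
    refine nonzero_proper_infix_F p1p2F ⟨t, [], by rw [f1']; simp [List.append_assoc]⟩ ?_
    intro h
    have hlen := congrArg List.length h
    rw [f1'] at hlen
    simp only [List.length_append] at hlen
    have ht0 : t.length = 0 := by omega
    exact tne (List.length_eq_zero_iff.mp ht0)
  have compz' : M.toQuiverData.Composable t ((t' ++ Q 1) ++ P 2) :=
    comp_extR (comp_of_path (f1' ▸ hP12.nz1.1)) ht'Q1ne
  have hT1le : T 1 <+: (t' ++ Q 1) ++ P 2 :=
    hT01.min _ (by simp [ht']) nzz' compz' hzz'
  -- t' ++ Q 1 is a prefix of T 1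
  have htQ1T1 : t' ++ Q 1 <+: T 1 := by
    rcases List.prefix_or_prefix_of_prefix hT1le (List.prefix_append (t' ++ Q 1) (P 2))
      with h | h
    · exfalso
      have h1 : t ++ T 1 <+: P 1 := by
        rw [f1']; exact (List.prefix_append_right_inj t).mpr h
      exact hP12.nz1.2 (zero_mono ⟨_, tt1F, List.infix_rfl⟩ h1.isInfix)
    · exact h
  obtain ⟨m₀, hm₀⟩ := htQ1T1
  have hT1eq : T 1 = t' ++ (Q 1 ++ m₀) := by rw [← hm₀, List.append_assoc]
  -- data for the perfect pair (p ++ t, t' ++ Q 1)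
  have nzpt : M.Nonzero (p ++ t) :=
    nonzero_infix hQ01.nz1 (List.prefix_append (p ++ t) t').isInfix
  have comppt : M.toQuiverData.Composable (p ++ t) (t' ++ Q 1) := by
    have hpath : M.toQuiverData.IsPath ((p ++ t ++ t') ++ Q 1) :=
      path_append hQ01.nz1.1 hQ01.nz2.1 hQ01.comp
    rw [List.append_assoc] at hpath
    exact comp_of_path hpath
  have zeropt : M.IsZero ((p ++ t) ++ (t' ++ Q 1)) := by
    rw [← List.append_assoc]
    exact ⟨_, qq1F, List.infix_rfl⟩
  have comp_pt' : M.toQuiverData.Composable p t := comp_of_path nzpt.1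
  have pairPT : M.PerfectPair (p ++ t) (t' ++ Q 1) := by
    refine ⟨by simp [pne], ht'Q1ne, nzpt, nzt'Q1, comppt, zeropt, ?_, ?_⟩
    · intro z hz0 hznz hcomp hzero
      by_cases htz : M.IsZero (t ++ z)
      · have compTz : M.toQuiverData.Composable t z := comp_shrinkL hcomp tne
        have hT1z : T 1 <+: z := hT01.min z hz0 hznz compTz htz
        exact List.IsPrefix.trans ⟨m₀, hm₀⟩ hT1z
      · have compTz : M.toQuiverData.Composable t z := comp_shrinkL hcomp tne
        have nztz : M.Nonzero (t ++ z) := ⟨path_append hT01.nz1.1 hznz.1 compTz, htz⟩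
        have zerop : M.IsZero (p ++ (t ++ z)) := by
          rw [← List.append_assoc]; exact hzero
        have compp : M.toQuiverData.Composable p (t ++ z) := comp_extR comp_pt' tne
        have hP1z : P 1 <+: t ++ z := hP01.min (t ++ z) (by simp [tne]) nztz compp zerop
        rw [f1'] at hP1z
        exact (List.prefix_append_right_inj t).mp hP1z
    · intro w hw0 hwnz hcomp hwzero
      by_cases hwt' : M.IsZero (w ++ t')
      · have hwT1zero : M.IsZero (w ++ T 1) := by
          rw [hT1eq, ← List.append_assoc]
          exact zero_mono hwt' (List.prefix_append (w ++ t') (Q 1 ++ m₀)).isInfix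
        have compwT1 : M.toQuiverData.Composable w (T 1) := by
          refine comp_congr hcomp rfl ?_
          rw [hT1eq, List.head?_append_of_ne_nil _ ht', List.head?_append_of_ne_nil _ ht']
        obtain ⟨v, hv⟩ := hT01.max w hw0 hwnz compwT1 hwT1zero
        have hvne : v ≠ [] := by
          intro hnil; rw [hnil, List.nil_append] at hv
          have h1 : t ++ t' <:+: p ++ t ++ t' := ⟨p, [], by simp [List.append_assoc]⟩
          rw [← hv] at hwt'
          exact hQ01.nz1.2 (zero_mono hwt' h1)
        have nzv : M.Nonzero v := nonzero_infix hwnz ⟨[], t, by simp [hv]⟩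
        have compv : M.toQuiverData.Composable v (P 1) := by
          have h1 : M.toQuiverData.Composable v t := comp_of_path (by rw [hv]; exact hwnz.1)
          refine comp_congr h1 rfl ?_
          rw [f1', List.head?_append_of_ne_nil _ tne]
        have zerov : M.IsZero (v ++ P 1) := by
          rw [f1', ← List.append_assoc, hv]; exact hwzero
        have hfinal : p <:+ v := hP01.max v hvne nzv compv zerov
        rw [← hv]
        exact suffix_extend hfinal
      · have compwt' : M.toQuiverData.Composable w t' := comp_shrinkR hcomp ht'
        have patht' : M.toQuiverData.IsPath t' :=
          path_infix hQ01.nz1.1 (List.suffix_append (p ++ t) t').isInfix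
        have nzwt' : M.Nonzero (w ++ t') := ⟨path_append hwnz.1 patht' compwt', hwt'⟩
        have zeroq : M.IsZero ((w ++ t') ++ Q 1) := by
          rw [List.append_assoc]; exact hwzero
        have compq : M.toQuiverData.Composable (w ++ t') (Q 1) :=
          comp_extL (comp_of_path nzt'Q1.1) ht'
        have hlast := hQ01.max (w ++ t') (by simp [hw0]) nzwt' compq zeroq
        exact suffix_strip hlast
  have P1perf : M.IsPerfect (P 1) := isPerfect_seq hnp hPper hPpair 1
  have tperf : M.IsPerfect t := ⟨nt, T, hnt, hT0, hTper, hTpair⟩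
  have t'Q1perf : M.IsPerfect (t' ++ Q 1) := perfect_factor tperf P1perf f1' ht'Q1ne
  exact isPerfect_of_pair_right pairPT t'Q1perf


end MonomialData

/-- Two cycles are equivalent (agree up to cyclic permutation): each is a
subpath of a power of the other. -/
def CyclesEquiv {E : Type} (c d : List E) : Prop :=
  ∃ m k, 0 < m ∧ 0 < k ∧ c <:+: (List.replicate m d).flatten ∧
    d <:+: (List.replicate k c).flatten


/-- for perfect paths `p ≺ q` with factorization `q = pr`
(`r` nontrivial, hence perfect), there is an arrow `q ⟶ p` in the Hasse
quiver of `(ℙ_Λ, ⪯)` iff `r` is co-elementary. -/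
theorem hasseArrow_iff_coelementary {V E : Type} (M : MonomialData V E)
    (p q r : List E) (hp : M.IsPerfect p) (hq : M.IsPerfect q)
    (hfac : q = p ++ r) (hr : r ≠ []) :
    M.HasseArrowPrec q p ↔ M.CoElementary r := by
  constructor
  · rintro ⟨hp', hq', hpq, hpneq, hnomid⟩
    refine ⟨MonomialData.perfect_factor hp hq hfac hr, ?_⟩
    rintro ⟨t, htperf, htr, htne⟩
    obtain ⟨t', ht'⟩ := htr
    have ht'ne : t' ≠ [] := fun h => htne (by rw [← ht', h, List.append_nil])
    have hqfac : q = p ++ t ++ t' := by rw [hfac, ← ht', ← List.append_assoc]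
    have hptperf : M.IsPerfect (p ++ t) :=
      MonomialData.perfect_append hp htperf (hqfac ▸ hq) ht'ne
    refine hnomid ⟨p ++ t, hptperf, List.prefix_append p t, ?_, ⟨t', hqfac.symm⟩, ?_⟩
    · intro h
      exact htperf.ne_nil
        (List.append_cancel_left (show p ++ [] = p ++ t by rw [List.append_nil]; exact h)).symm
    · intro h
      rw [hqfac] at h
      exact ht'ne (List.append_cancel_left
        (show (p ++ t) ++ [] = (p ++ t) ++ t' by rw [List.append_nil]; exact h)).symm
  · rintro ⟨hrperf, hnodiv⟩
    refine ⟨hp, hq, by rw [hfac]; exact List.prefix_append p r, ?_, ?_⟩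
    · intro h
      rw [hfac] at h
      exact hr (List.append_cancel_left
        (show p ++ [] = p ++ r by rw [List.append_nil]; exact h)).symm
    · rintro ⟨s, hsperf, hps, hpnes, hsq, hsneq⟩
      obtain ⟨t, ht⟩ := hps
      have htne : t ≠ [] := fun h => hpnes (by rw [← ht, h, List.append_nil])
      have htperf := MonomialData.perfect_factor hp hsperf ht.symm htne
      have htr : t <+: r := by
        have h1 : p ++ t <+: p ++ r := by rw [ht, ← hfac]; exact hsq
        exact (List.prefix_append_right_inj p).mp h1
      exact hnodiv ⟨t, htperf, htr, fun h => hsneq (by rw [← ht, h, ← hfac])⟩
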